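/- Let ℓ ∈ ℕ* and let ã be a symmetric p-linear map (p = 2ℓ) producing x-independent symbols ã(U₁,...,U_p; ξ) ∈ ℂ, satisfying: (reality/reversibility) ã(Π⁻_{n_1}U,...,Π⁻_{n_ℓ}U, Π⁺_{n_1}U,...,Π⁺_{n_ℓ}U; ξ) = conj( ã(Π⁺_{n_1}U,...,Π⁺_{n_ℓ}U, Π⁻_{n_1}U,...,Π⁻_{n_ℓ}U; −ξ) ), and (parity) ã(U,...,U; ξ) = ã(U,...,U; −ξ). Then for any n_1,...,n_ℓ ∈ ℕ and any ξ, the number ã(Π⁺_{n_1}U,...,Π⁺_{n_ℓ}U, Π⁻_{n_1}U,...,Π⁻_{n_ℓ}U; ξ) is real. -/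
import Mathlib


open MeasureTheory

instance : Fact (0 < 2 * Real.pi) := ⟨by positivity⟩

/-- The basis function `φ_n(x) = cos(nx)/√π` of even `L²` functions on `𝕋`. -/
noncomputable def phiN (n : ℕ) : AddCircle (2 * Real.pi) → ℂ :=
  fun x => (fourier (n : ℤ) x + fourier (-(n : ℤ)) x) / (2 * Real.sqrt Real.pi)

/-- The coefficient `û(n) = ∫_𝕋 u φ_n`. -/
noncomputable def uhat (u : AddCircle (2 * Real.pi) → ℂ) (n : ℕ) : ℂ :=
  ∫ x, u x * phiN n x

/-- The signed projector `Π⁺_n U = û(n) e₊ φ_n` for `U = (u, ū)`. -/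
noncomputable def Pp (n : ℕ) (U : AddCircle (2 * Real.pi) → ℂ × ℂ) :
    AddCircle (2 * Real.pi) → ℂ × ℂ :=
  fun x => (uhat (fun y => (U y).1) n * phiN n x, 0)

/-- The signed projector `Π⁻_n U = conj(û(n)) e₋ φ_n` for `U = (u, ū)`. -/
noncomputable def Pm (n : ℕ) (U : AddCircle (2 * Real.pi) → ℂ × ℂ) :
    AddCircle (2 * Real.pi) → ℂ × ℂ :=
  fun x => (0, (starRingEnd ℂ) (uhat (fun y => (U y).1) n) * phiN n x)

open Finset in
lemma symm_diag_zero {m : ℕ} {M : Type*} [AddCommGroup M] [Module ℂ M]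
    (B : MultilinearMap ℂ (fun _ : Fin m => M) ℂ)
    (hsym : ∀ (σ : Equiv.Perm (Fin m)) (v : Fin m → M), B (v ∘ σ) = B v)
    (hdiag : ∀ w : M, B (fun _ => w) = 0) (v : Fin m → M) : B v = 0 := by
  classical
  have key : ∑ S ∈ (Finset.univ : Finset (Fin m)).powerset,
      (-1 : ℂ) ^ (m - S.card) * B (fun _ => ∑ i ∈ S, v i) = 0 := by
    simp [hdiag]
  have expand : ∀ S : Finset (Fin m),
      B (fun _ => ∑ i ∈ S, v i)
        = ∑ r : Fin m → Fin m, if (∀ i, r i ∈ S) then B (v ∘ r) else 0 := by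
    intro S
    rw [B.map_sum_finset (fun _ j => v j) (fun _ => S)]
    rw [← Finset.sum_filter]
    apply Finset.sum_congr
    · ext r; simp [Fintype.mem_piFinset]
    · intro r _; rfl
  rw [Finset.sum_congr rfl (fun S _ => by rw [expand S])] at key
  simp_rw [Finset.mul_sum, mul_ite, mul_zero] at key
  rw [Finset.sum_comm] at key
  have coeff : ∀ r : Fin m → Fin m,
      (∑ S ∈ (Finset.univ : Finset (Fin m)).powerset,
        if (∀ i, r i ∈ S) then (-1 : ℂ) ^ (m - S.card) * B (v ∘ r) else 0)
      = (if Function.Surjective r then (1 : ℂ) else 0) * B (v ∘ r) := by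
    intro r
    set R : Finset (Fin m) := Finset.image r Finset.univ with hR
    have hcond : ∀ S : Finset (Fin m), (∀ i, r i ∈ S) ↔ R ⊆ S := by
      intro S
      constructor
      · intro h x hx
        rcases Finset.mem_image.1 hx with ⟨i, _, rfl⟩; exact h i
      · intro h i; exact h (Finset.mem_image.2 ⟨i, Finset.mem_univ i, rfl⟩)
    simp_rw [hcond]
    rw [Finset.sum_congr rfl (fun S _ => show (if R ⊆ S then (-1 : ℂ) ^ (m - S.card) * B (v ∘ r) else 0) = (if R ⊆ S then (-1 : ℂ) ^ (m - S.card) else 0) * B (v ∘ r) from by split <;> simp)]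
    rw [← Finset.sum_mul]
    congr 1
    -- reindex S ↦ Sᶜ
    have : ∑ S ∈ (Finset.univ : Finset (Fin m)).powerset,
        (if R ⊆ S then (-1 : ℂ) ^ (m - S.card) else 0)
        = ∑ T ∈ (Finset.univ : Finset (Fin m)).powerset,
        (if T ⊆ Rᶜ then (-1 : ℂ) ^ T.card else 0) := by
      apply Finset.sum_nbij' (i := fun S => Sᶜ) (j := fun T => Tᶜ)
      · intro S _; simp
      · intro T _; simp
      · intro S _; simp
      · intro T _; simp
      · intro S _
        have h1 : Sᶜ ⊆ Rᶜ ↔ R ⊆ S := by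
          constructor
          · intro h; simpa using Finset.compl_subset_compl.2 h
          · exact fun h => Finset.compl_subset_compl.2 h
        simp [h1, Finset.card_compl]
    rw [this]
    rw [← Finset.sum_filter]
    have hfil : (Finset.univ : Finset (Fin m)).powerset.filter (fun T => T ⊆ Rᶜ)
        = Rᶜ.powerset := by
      ext T; simp [Finset.mem_powerset]
    rw [hfil]
    have hz : (∑ T ∈ Rᶜ.powerset, (-1 : ℂ) ^ T.card)
        = ((∑ T ∈ Rᶜ.powerset, (-1 : ℤ) ^ T.card : ℤ) : ℂ) := by push_cast; rfl
    rw [hz, Finset.sum_powerset_neg_one_pow_card]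
    have hsurj : Rᶜ = ∅ ↔ Function.Surjective r := by
      rw [show (∅ : Finset (Fin m)) = ⊥ from rfl, compl_eq_bot]
      constructor
      · intro h b
        have hb : b ∈ R := by rw [show (⊤ : Finset (Fin m)) = Finset.univ from rfl] at h; rw [h]; exact Finset.mem_univ b
        rcases Finset.mem_image.1 hb with ⟨a, _, ha⟩; exact ⟨a, ha⟩
      · intro h
        rw [show (⊤ : Finset (Fin m)) = Finset.univ from rfl]
        apply Finset.eq_univ_iff_forall.2
        intro b; rcases h b with ⟨a, rfl⟩
        exact Finset.mem_image.2 ⟨a, Finset.mem_univ a, rfl⟩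
    by_cases h : Function.Surjective r
    · rw [if_pos (hsurj.2 h), if_pos h]; simp
    · rw [if_neg (fun hh => h (hsurj.1 hh)), if_neg h]; simp
  rw [Finset.sum_congr rfl (fun r _ => coeff r)] at key
  -- now key : ∑ r, (if Surjective r then 1 else 0) * B (v ∘ r) = 0
  rw [Finset.sum_congr rfl (fun r _ => show (if Function.Surjective r then (1:ℂ) else 0) * B (v ∘ r) = (if Function.Surjective r then B (v ∘ r) else 0) from by split <;> simp)] at key
  rw [← Finset.sum_filter] at key
  have hbij : ∑ r ∈ Finset.univ.filter (fun r : Fin m → Fin m => Function.Surjective r), B (v ∘ r)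
      = ∑ _σ : Equiv.Perm (Fin m), B v := by
    rw [Finset.sum_bij (i := fun (σ : Equiv.Perm (Fin m)) _ => (⇑σ : Fin m → Fin m))
      (s := Finset.univ) (t := Finset.univ.filter (fun r : Fin m → Fin m => Function.Surjective r))
      (g := fun r => B (v ∘ r))]
    · intro σ _; simp [σ.surjective]
    · intro σ _ τ _ h; exact Equiv.coe_fn_injective h
    · intro r hr
      have hsurj : Function.Surjective r := (Finset.mem_filter.1 hr).2
      have hb : Function.Bijective r := Finite.surjective_iff_bijective.1 hsurj
      exact ⟨Equiv.ofBijective r hb, Finset.mem_univ _, rfl⟩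
    · intro σ _; exact (hsym σ v).symm
  rw [hbij] at key
  simp only [Finset.sum_const, Finset.card_univ, Fintype.card_perm, Fintype.card_fin] at key
  have : ((m.factorial : ℂ)) ≠ 0 := by exact_mod_cast Nat.factorial_ne_zero m
  have := smul_eq_zero.1 key
  rcases this with h | h
  · exact absurd (by exact_mod_cast h) (Nat.factorial_ne_zero m)
  · exact h

/-- Key cancellation: let `ã` be a symmetric `2ℓ`-linear map with values in
`x`-independent symbols `ξ ↦ ã(U₁,…,U_{2ℓ}; ξ) ∈ ℂ`, satisfying the
reality/reversibility condition
`ã(Π⁻_{n⃗}U, Π⁺_{n⃗}U; ξ) = conj(ã(Π⁺_{n⃗}U, Π⁻_{n⃗}U; −ξ))` and the parity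
condition `ã(V,…,V; ξ) = ã(V,…,V; −ξ)`.  Then the resonant symbol
`ã(Π⁺_{n_1}U,…,Π⁺_{n_ℓ}U, Π⁻_{n_1}U,…,Π⁻_{n_ℓ}U; ξ)` is real. -/
theorem resonant_symbol_real (ℓ : ℕ) (hℓ : 1 ≤ ℓ)
    (A : MultilinearMap ℂ
      (fun _ : Fin (2 * ℓ) => (AddCircle (2 * Real.pi) → ℂ × ℂ)) (ℝ → ℂ))
    (hsym : ∀ (σ : Equiv.Perm (Fin (2 * ℓ)))
      (v : Fin (2 * ℓ) → AddCircle (2 * Real.pi) → ℂ × ℂ), A (v ∘ σ) = A v)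
    (U : AddCircle (2 * Real.pi) → ℂ × ℂ) (hUcont : Continuous U)
    (hUreal : ∀ x, (U x).2 = (starRingEnd ℂ) (U x).1)
    (hUeven : ∀ x, U (-x) = U x)
    (hrev : ∀ (n : Fin ℓ → ℕ) (ξ : ℝ),
      A (fun j : Fin (2 * ℓ) =>
          if h : (j : ℕ) < ℓ then Pm (n ⟨(j : ℕ), h⟩) U
          else Pp (n ⟨(j : ℕ) - ℓ, by have := j.isLt; omega⟩) U) ξ
        = (starRingEnd ℂ)
            (A (fun j : Fin (2 * ℓ) =>
                if h : (j : ℕ) < ℓ then Pp (n ⟨(j : ℕ), h⟩) U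
                else Pm (n ⟨(j : ℕ) - ℓ, by have := j.isLt; omega⟩) U) (-ξ)))
    (hpar : ∀ (V : AddCircle (2 * Real.pi) → ℂ × ℂ) (ξ : ℝ),
      A (fun _ => V) ξ = A (fun _ => V) (-ξ)) :
    ∀ (n : Fin ℓ → ℕ) (ξ : ℝ),
      (A (fun j : Fin (2 * ℓ) =>
          if h : (j : ℕ) < ℓ then Pp (n ⟨(j : ℕ), h⟩) U
          else Pm (n ⟨(j : ℕ) - ℓ, by have := j.isLt; omega⟩) U) ξ).im = 0 := by
  intro n ξ
  haveI : NeZero (2 * ℓ) := ⟨by omega⟩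
  set vP : Fin (2 * ℓ) → AddCircle (2 * Real.pi) → ℂ × ℂ :=
    fun j : Fin (2 * ℓ) =>
      if h : (j : ℕ) < ℓ then Pp (n ⟨(j : ℕ), h⟩) U
      else Pm (n ⟨(j : ℕ) - ℓ, by have := j.isLt; omega⟩) U with hvP
  set vM : Fin (2 * ℓ) → AddCircle (2 * Real.pi) → ℂ × ℂ :=
    fun j : Fin (2 * ℓ) =>
      if h : (j : ℕ) < ℓ then Pm (n ⟨(j : ℕ), h⟩) U
      else Pp (n ⟨(j : ℕ) - ℓ, by have := j.isLt; omega⟩) U with hvM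
  -- parity for arbitrary arguments, via polarization
  have hpar' : ∀ v, A v ξ = A v (-ξ) := by
    intro v
    have hB := symm_diag_zero (m := 2 * ℓ)
      ((LinearMap.proj (R := ℂ) (φ := fun _ : ℝ => ℂ) ξ
        - LinearMap.proj (R := ℂ) (φ := fun _ : ℝ => ℂ) (-ξ)).compMultilinearMap A)
      (fun σ w => by
        simp only [LinearMap.compMultilinearMap_apply, hsym σ w])
      (fun w => by
        simp only [LinearMap.compMultilinearMap_apply, LinearMap.sub_apply,
          LinearMap.proj_apply]
        rw [← hpar w ξ]; ring) v
    simp only [LinearMap.compMultilinearMap_apply, LinearMap.sub_apply,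
      LinearMap.proj_apply, sub_eq_zero] at hB
    exact hB
  -- the half-swap permutation
  set c : Fin (2 * ℓ) := ⟨ℓ, by omega⟩ with hc
  have hswap : vP ∘ (Equiv.addRight c) = vM := by
    funext j
    have hval : ((j + c : Fin (2 * ℓ)) : ℕ)
        = if (j : ℕ) < ℓ then (j : ℕ) + ℓ else (j : ℕ) - ℓ := by
      rw [Fin.val_add, show (c : ℕ) = ℓ from rfl]
      have hj := j.isLt
      by_cases hjl : (j : ℕ) < ℓ
      · rw [if_pos hjl]; exact Nat.mod_eq_of_lt (by omega)
      · rw [if_neg hjl]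
        have : (j : ℕ) + ℓ = ((j : ℕ) - ℓ) + 1 * (2 * ℓ) := by omega
        rw [this, Nat.add_mul_mod_self_right]
        exact Nat.mod_eq_of_lt (by omega)
    simp only [Function.comp_apply, Equiv.coe_addRight, hvP, hvM]
    by_cases hjl : (j : ℕ) < ℓ
    · rw [if_pos hjl] at hval
      rw [dif_neg (show ¬ ((j + c : Fin (2 * ℓ)) : ℕ) < ℓ by rw [hval]; omega), dif_pos hjl]
      exact congrArg (fun k : Fin ℓ => Pm (n k) U) (Fin.ext (show ((j + c : Fin (2 * ℓ)) : ℕ) - ℓ = (j : ℕ) by omega))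
    · rw [if_neg hjl] at hval
      have hj := j.isLt
      rw [dif_pos (show ((j + c : Fin (2 * ℓ)) : ℕ) < ℓ by rw [hval]; omega), dif_neg hjl]
      exact congrArg (fun k : Fin ℓ => Pp (n k) U) (Fin.ext (show ((j + c : Fin (2 * ℓ)) : ℕ) = (j : ℕ) - ℓ by omega))
  have hMP : A vM = A vP := by rw [← hswap, hsym]
  have h1 := hrev n ξ
  rw [show (fun j : Fin (2 * ℓ) =>
      if h : (j : ℕ) < ℓ then Pm (n ⟨(j : ℕ), h⟩) U
      else Pp (n ⟨(j : ℕ) - ℓ, by have := j.isLt; omega⟩) U) = vM from rfl,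
    show (fun j : Fin (2 * ℓ) =>
      if h : (j : ℕ) < ℓ then Pp (n ⟨(j : ℕ), h⟩) U
      else Pm (n ⟨(j : ℕ) - ℓ, by have := j.isLt; omega⟩) U) = vP from rfl,
    hMP, ← hpar' vP] at h1
  exact Complex.conj_eq_iff_im.1 h1.symm
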